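/- Let ρ > 1, let E_ρ := {(u + u⁻¹)/2 : u ∈ ℂ, 1 ≤ |u| ≤ ρ} be the closed Bernstein ellipse, and let q be holomorphic on an open set containing E_ρ, real-valued on [−1,1], and bounded in modulus by M on E_ρ. Then there exist real coefficients (α_k)_{k≥0} such that q(y) = α₀ + 2·∑_{k=1}^∞ α_k T_k(y) for all y ∈ [−1,1] (with the series converging), and |α_k| ≤ M/ρ^k for every k ≥ 0, where T_k denotes the k-th Chebyshev polynomial of the first kind. -/

import Mathlib

open Complex intervalIntegral Real Metric

/-- The closed Bernstein ellipse `E_ρ = {(u + u⁻¹)/2 : 1 ≤ |u| ≤ ρ}`. -/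
def bernsteinEllipse (ρ : ℝ) : Set ℂ :=
  {z : ℂ | ∃ u : ℂ, 1 ≤ ‖u‖ ∧ ‖u‖ ≤ ρ ∧ z = (u + u⁻¹) / 2}

/-- The basic trigonometric integral `∫_0^{2π} e^{-inθ} q(cos θ) dθ`. -/
noncomputable def Jint (q : ℂ → ℂ) (n : ℤ) : ℂ :=
  ∫ θ in (0:ℝ)..(2*π), Complex.exp (-n * θ * Complex.I) * q (Complex.cos θ)

lemma two_cos_eq (z : ℂ) :
    Complex.exp (z * Complex.I) + (Complex.exp (z * Complex.I))⁻¹ = 2 * Complex.cos z := by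
  rw [← Complex.exp_neg, show -(z * Complex.I) = (-z) * Complex.I by ring,
    Complex.exp_mul_I, Complex.exp_mul_I, Complex.cos_neg, Complex.sin_neg]
  ring

lemma cosc_eq (θ : ℝ) :
    Complex.cos θ = (Complex.exp (θ * Complex.I) + (Complex.exp (θ * Complex.I))⁻¹) / 2 := by
  rw [two_cos_eq]; ring

lemma Jint_neg (q : ℂ → ℂ) (n : ℤ) : Jint q (-n) = Jint q n := by
  have h := intervalIntegral.integral_comp_sub_left
    (fun θ : ℝ => Complex.exp (-n * θ * Complex.I) * q (Complex.cos θ)) (2*π) (a := 0) (b := 2*π)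
  simp only [sub_self, sub_zero] at h
  rw [Jint, Jint, ← h]
  apply intervalIntegral.integral_congr
  intro x _
  have h1 : Complex.cos ((2*π - x : ℝ) : ℂ) = Complex.cos (x:ℂ) := by
    push_cast; exact Complex.cos_two_pi_sub _
  have h2 : Complex.exp (-(n:ℂ) * ((2*π - x : ℝ):ℂ) * Complex.I) =
      Complex.exp (-((-n:ℤ):ℂ) * (x:ℂ) * Complex.I) := by
    push_cast
    rw [show (-(n:ℂ)) * (2*(π:ℂ) - x) * Complex.I =
      (-n : ℤ) * (2*π*Complex.I) + (- -(n:ℂ) * x * Complex.I) by push_cast; ring]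
    rw [Complex.exp_add, Complex.exp_int_mul_two_pi_mul_I, one_mul]
  simp only [h1, h2]

lemma Jint_bound (ρ M : ℝ) (hρ : 1 < ρ) (q : ℂ → ℂ) (U : Set ℂ)
    (hU : IsOpen U) (hEU : bernsteinEllipse ρ ⊆ U)
    (hq : DifferentiableOn ℂ q U)
    (hbd : ∀ z ∈ bernsteinEllipse ρ, ‖q z‖ ≤ M) (n : ℕ) :
    ‖Jint q n‖ ≤ 2 * π * (M / ρ ^ n) := by
  have hρ0 : (0:ℝ) < ρ := lt_trans one_pos hρ
  set F : ℂ → ℂ := fun u => u ^ (-(n+1 : ℤ)) * q ((u + u⁻¹)/2) with hF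
  -- differentiability on the annulus
  have hFd : ∀ u : ℂ, 1 ≤ ‖u‖ → ‖u‖ ≤ ρ → DifferentiableAt ℂ F u := by
    intro u h1 h2
    have hu0 : u ≠ 0 := by
      intro h; rw [h, norm_zero] at h1; linarith
    have hqd : DifferentiableAt ℂ q ((u + u⁻¹)/2) :=
      hq.differentiableAt (hU.mem_nhds (hEU ⟨u, h1, h2, rfl⟩))
    have hin : DifferentiableAt ℂ (fun u : ℂ => (u + u⁻¹)/2) u :=
      (differentiableAt_id.add (differentiableAt_inv hu0)).div_const 2
    exact ((differentiableAt_zpow.mpr (Or.inl hu0)).mul (hqd.comp u hin))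
  -- annulus equality
  have heq : (∮ z in C(0, ρ), F z) = ∮ z in C(0, 1), F z := by
    refine Complex.circleIntegral_eq_of_differentiable_on_annulus_off_countable one_pos hρ.le
      Set.countable_empty ?_ ?_
    · intro z hz
      simp only [Set.mem_diff, mem_closedBall, mem_ball, dist_zero_right, not_lt] at hz
      exact (hFd z hz.2 hz.1).continuousAt.continuousWithinAt
    · intro z hz
      simp only [Set.diff_empty, Set.mem_diff, mem_ball, mem_closedBall, dist_zero_right,
        not_le] at hz
      exact hFd z hz.2.le hz.1.le
  -- circle integral at radius 1 equals I * Jint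
  have h1 : (∮ z in C(0, 1), F z) = Complex.I * Jint q n := by
    rw [circleIntegral, Jint, ← intervalIntegral.integral_const_mul]
    apply intervalIntegral.integral_congr
    intro θ _
    have hc : circleMap 0 1 θ = Complex.exp (θ * Complex.I) := by
      simp [circleMap]
    simp only [deriv_circleMap, hc, smul_eq_mul, hF]
    have e1 : (Complex.exp (θ * Complex.I)) ^ (-(n+1) : ℤ)
        = Complex.exp ((-(n+1) : ℤ) * ((θ:ℂ) * Complex.I)) := (Complex.exp_int_mul _ _).symm
    rw [e1, ← cosc_eq]
    rw [show Complex.exp (↑θ * Complex.I) * Complex.I *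
        (Complex.exp ((-(n+1) : ℤ) * ((θ:ℂ) * Complex.I)) * q (Complex.cos θ))
      = Complex.I * ((Complex.exp (↑θ * Complex.I) * Complex.exp ((-(n+1) : ℤ) * ((θ:ℂ) * Complex.I))) * q (Complex.cos θ)) by ring]
    rw [← Complex.exp_add,
      show (θ:ℂ) * Complex.I + (-(n+1) : ℤ) * ((θ:ℂ) * Complex.I) = -(n:ℂ) * θ * Complex.I by push_cast; ring]
    norm_cast
  -- norm bound at radius ρ
  have hbd2 : ‖∮ z in C(0, ρ), F z‖ ≤ 2 * π * ρ * (ρ ^ (-(n+1) : ℤ) * M) := by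
    have := circleIntegral.norm_integral_le_of_norm_le_const (f := F) (c := 0) (R := ρ)
      (C := ρ ^ (-(n+1) : ℤ) * M) hρ0.le ?_
    · exact this
    · intro z hz
      rw [mem_sphere_zero_iff_norm] at hz
      have hz1 : (1:ℝ) ≤ ‖z‖ := by rw [hz]; exact hρ.le
      have hmem : (z + z⁻¹)/2 ∈ bernsteinEllipse ρ := ⟨z, hz1, hz.le, rfl⟩
      calc ‖F z‖ = ‖z‖ ^ (-(n+1) : ℤ) * ‖q ((z + z⁻¹)/2)‖ := by
            rw [hF]; simp [norm_zpow]
        _ ≤ ρ ^ (-(n+1) : ℤ) * M := by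
            rw [hz]
            exact mul_le_mul_of_nonneg_left (hbd _ hmem) (zpow_nonneg hρ0.le _)
  -- assemble
  have hJ : ‖Jint q n‖ = ‖∮ z in C(0, ρ), F z‖ := by
    rw [heq, h1]
    simp [norm_mul]
  rw [hJ]
  refine hbd2.trans (le_of_eq ?_)
  have hzp : ρ ^ (-(n+1) : ℤ) = (ρ ^ (n+1))⁻¹ := by
    rw [zpow_neg]
    norm_cast
  rw [hzp, pow_succ]
  field_simp

/-- Chebyshev expansion of an analytic function: if `q` is holomorphic on an open set
containing the closed Bernstein ellipse `E_ρ` (`ρ > 1`), real-valued on `[-1,1]`, and bounded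
in modulus by `M` on `E_ρ`, then there are real coefficients `α_k` with
`q(y) = α₀ + 2 ∑_{k≥1} α_k T_k(y)` on `[-1,1]` and `|α_k| ≤ M / ρ^k` for all `k`. -/
theorem stmt5 (ρ M : ℝ) (hρ : 1 < ρ) (q : ℂ → ℂ) (U : Set ℂ)
    (hU : IsOpen U) (hEU : bernsteinEllipse ρ ⊆ U)
    (hq : DifferentiableOn ℂ q U)
    (hreal : ∀ y : ℝ, y ∈ Set.Icc (-1 : ℝ) 1 → (q y).im = 0)
    (hbd : ∀ z ∈ bernsteinEllipse ρ, ‖q z‖ ≤ M) :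
    ∃ α : ℕ → ℝ,
      (∀ k : ℕ, |α k| ≤ M / ρ ^ k) ∧
      ∀ y : ℝ, y ∈ Set.Icc (-1 : ℝ) 1 →
        HasSum
          (fun k : ℕ =>
            2 * α (k + 1) * (Polynomial.Chebyshev.T ℝ ((k : ℤ) + 1)).eval y)
          ((q y).re - α 0) := by
  have hJb : ∀ n : ℕ, ‖Jint q n‖ ≤ 2 * π * (M / ρ ^ n) :=
    Jint_bound ρ M hρ q U hU hEU hq hbd
  have hJn : ∀ n : ℤ, Jint q (-n) = Jint q n := fun n => Jint_neg q n
  haveI : Fact (0 < 2*π) := ⟨by positivity⟩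
  have hρ0 : (0:ℝ) < ρ := lt_trans one_pos hρ
  -- membership of cosines in the ellipse
  have cos_mem : ∀ θ : ℝ, Complex.cos θ ∈ bernsteinEllipse ρ := by
    intro θ
    refine ⟨Complex.exp (θ * Complex.I), ?_, ?_, cosc_eq θ⟩
    · simp [Complex.norm_exp_ofReal_mul_I]
    · simp [Complex.norm_exp_ofReal_mul_I]; exact hρ.le
  -- the periodic function
  set g : ℝ → ℂ := fun θ => q (Complex.cos θ) with hgdef
  have hper : Function.Periodic g (2*π) := by
    intro θ
    simp only [hgdef]
    congr 1
    push_cast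
    exact Complex.cos_add_two_pi _
  have hgcont : Continuous g := by
    rw [continuous_iff_continuousAt]
    intro θ
    have : ContinuousAt q (Complex.cos θ) :=
      (hq.differentiableAt (hU.mem_nhds (hEU (cos_mem θ)))).continuousAt
    have h2 : ContinuousAt (fun θ : ℝ => Complex.cos θ) θ :=
      (Complex.continuous_cos.comp Complex.continuous_ofReal).continuousAt
    exact ContinuousAt.comp this h2
  set Gc : C(AddCircle (2*π), ℂ) := ⟨hper.lift, continuous_coinduced_dom.mpr hgcont⟩ with hGc
  set c : ℤ → ℂ := fourierCoeff (⇑Gc) with hc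
  -- link to Jint
  have link : ∀ n : ℤ, c n = (1/(2*π) : ℝ) • Jint q n := by
    intro n
    rw [hc, fourierCoeff_eq_intervalIntegral (⇑Gc) n 0, zero_add]
    congr 1
    rw [Jint]
    apply intervalIntegral.integral_congr
    intro x _
    have h1 : @fourier (2*π) (-n) (x : AddCircle (2*π)) = Complex.exp (-n * x * Complex.I) := by
      rw [fourier_coe_apply]
      congr 1
      push_cast
      have hπ : (π:ℂ) ≠ 0 := Complex.ofReal_ne_zero.mpr Real.pi_ne_zero
      field_simp
    have h2 : Gc ((x : ℝ) : AddCircle (2*π)) = g x := rfl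
    simp only [h1, h2, smul_eq_mul]
    rfl
  -- nonnegativity of M
  have hM0 : 0 ≤ M :=
    le_trans (norm_nonneg (q 1)) (hbd 1 ⟨1, by simp, by simp; exact hρ.le, by norm_num⟩)
  -- bounds on coefficients
  have cbound : ∀ n : ℕ, ‖c n‖ ≤ M / ρ ^ n := by
    intro n
    rw [link, norm_smul]
    have hn : ‖(1/(2*π) : ℝ)‖ = 1/(2*π) := by
      rw [Real.norm_eq_abs, abs_of_pos (by positivity)]
    rw [hn]
    calc (1/(2*π)) * ‖Jint q n‖ ≤ (1/(2*π)) * (2*π*(M/ρ^n)) :=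
          mul_le_mul_of_nonneg_left (hJb n) (by positivity)
      _ = M / ρ^n := by
          have : (π:ℝ) ≠ 0 := Real.pi_ne_zero
          field_simp
  have ceven : ∀ n : ℤ, c (-n) = c n := fun n => by rw [link, link, hJn]
  -- summability
  have hgeo : Summable (fun k : ℕ => M * ρ⁻¹ ^ k) :=
    (summable_geometric_of_lt_one (by positivity) (by
      rw [inv_lt_one_iff₀]; right; exact hρ)).mul_left M
  have hdiv : ∀ k : ℕ, M / ρ ^ k = M * ρ⁻¹ ^ k := by
    intro k; rw [div_eq_mul_inv, inv_pow]
  have csum : Summable c := by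
    apply Summable.of_nat_of_neg_add_one
    · refine Summable.of_norm_bounded hgeo ?_
      intro k
      rw [← hdiv]
      exact cbound k
    · refine Summable.of_norm_bounded hgeo ?_
      intro k
      rw [show (-(k+1 : ℤ)) = -((k+1 : ℕ) : ℤ) by push_cast; ring, ceven]
      refine (cbound (k+1)).trans ?_
      rw [← hdiv]
      refine div_le_div_of_nonneg_left hM0 (by positivity) ?_
      exact pow_le_pow_right₀ hρ.le (Nat.le_succ k)
  have hsum := has_pointwise_sum_fourier_series_of_summable (f := Gc) csum
  -- fourier values at real points
  have hfour : ∀ (m : ℤ) (x : ℝ),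
      @fourier (2*π) m (x : AddCircle (2*π)) = Complex.exp (m * x * Complex.I) := by
    intro m x
    rw [fourier_coe_apply]
    congr 1
    have hπ : (π:ℂ) ≠ 0 := Complex.ofReal_ne_zero.mpr Real.pi_ne_zero
    push_cast
    field_simp
  set α : ℕ → ℝ := fun k => (c k).re with hα
  have hαb : ∀ k : ℕ, |α k| ≤ M / ρ ^ k :=
    fun k => le_trans (Complex.abs_re_le_norm _) (cbound k)
  have main : ∀ y : ℝ, y ∈ Set.Icc (-1 : ℝ) 1 →
      HasSum (fun k : ℕ => 2 * α (k + 1) * (Polynomial.Chebyshev.T ℝ ((k : ℤ) + 1)).eval y)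
        ((q y).re - α 0) := by
    intro y hy
    set θ : ℝ := Real.arccos y with hθ
    have hθcos : Real.cos θ = y := Real.cos_arccos hy.1 hy.2
    have hGθ : Gc ((θ : ℝ) : AddCircle (2*π)) = q y := by
      show g θ = q y
      rw [hgdef]
      simp only
      rw [← Complex.ofReal_cos, hθcos]
    have hs2 := hsum ((θ : ℝ) : AddCircle (2*π))
    rw [hGθ] at hs2
    set f : ℤ → ℂ := fun i => c i • @fourier (2*π) i ((θ : ℝ) : AddCircle (2*π)) with hfd
    have h3 : HasSum (fun k : ℕ => f k + f (-k)) (q y + f 0) := hs2.nat_add_neg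
    have h4 : HasSum (fun k : ℕ => f ((k:ℤ)+1) + f (-((k:ℤ)+1))) (q y - f 0) := by
      have h4' := (hasSum_nat_add_iff' (f := fun k : ℕ => f k + f (-(k : ℤ))) 1).mpr h3
      simp only [Finset.range_one, Finset.sum_singleton, Nat.cast_zero, neg_zero,
        Nat.cast_add, Nat.cast_one] at h4'
      have hv : q ↑y + f 0 - (f 0 + f 0) = q ↑y - f 0 := by ring
      rwa [hv] at h4'
    -- identify the terms
    have hterm : ∀ m : ℤ, f m + f (-m) = ((2 * Real.cos (m * θ) : ℝ) : ℂ) * c m := by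
      intro m
      have e1 : f m = c m * Complex.exp (((m * θ : ℝ) : ℂ) * Complex.I) := by
        rw [hfd]
        simp only [smul_eq_mul, hfour m θ]
        push_cast
        ring_nf
      have e2 : f (-m) = c m * (Complex.exp (((m * θ : ℝ) : ℂ) * Complex.I))⁻¹ := by
        rw [hfd]
        simp only [smul_eq_mul, hfour (-m) θ, ceven]
        rw [← Complex.exp_neg]
        push_cast
        ring_nf
      rw [e1, e2, ← mul_add, two_cos_eq]
      push_cast [Complex.ofReal_cos]
      ring
    have hre : ∀ m : ℤ, (f m + f (-m)).re = (c m).re * (2 * Real.cos (m * θ)) := by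
      intro m
      rw [hterm m, Complex.re_ofReal_mul]
      ring
    have hf0 : f 0 = c 0 := by
      rw [hfd]; simp
    have h5 := Complex.reCLM.hasSum h4
    have hfe : (fun k : ℕ => Complex.reCLM (f ((k:ℤ)+1) + f (-((k:ℤ)+1))))
        = fun k : ℕ => 2 * α (k + 1) * (Polynomial.Chebyshev.T ℝ ((k : ℤ) + 1)).eval y := by
      funext k
      rw [Complex.reCLM_apply, hre ((k:ℤ)+1)]
      rw [← hθcos, Polynomial.Chebyshev.T_real_cos]
      have hk : α (k+1) = (c ((k:ℤ)+1)).re := by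
        simp only [hα]
        norm_cast
      rw [hk]
      ring
    rw [hfe] at h5
    have hval : Complex.reCLM (q ↑y - f 0) = (q ↑y).re - α 0 := by
      rw [hf0]
      simp only [hα, Nat.cast_zero]
      simp
    rwa [hval] at h5
  exact ⟨α, hαb, main⟩
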